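/- arXiv:2008.07979 — 2 statements merged into one kernel-verified Lean document; each statement's English description precedes it below -/
import Mathlib

section
/- Let μ ≥ 0 and let f : E → ℝ satisfy the μ-strong-convexity lower bound with gradient map g. Let α : ℕ → ℝ with α_k ∈ (0,1) for all k, let y : ℕ → E, and let ψ_k : E → ℝ satisfy ψ_k(x) ≥ 0 for all k and x, with ψ_0 ≡ 0. Let Ψ : ℕ → ℝ satisfy ψ_m(x) ≤ Ψ_k for all m ≤ k and all x ∈ E. Define λ_0 = 1, λ_{k+1} = (1 − α_k)·λ_k, let Φ_0 : E → ℝ be arbitrary, and define recursively Φ_{k+1}(x) = (1 − α_k)·(Φ_k(x) + ψ_k(x)) − ψ_{k+1}(x) − Ψ_k + α_k·ψ_k(x) + α_k·( f(y_k) + ⟪g(y_k), x − y_k⟫ + (μ/2)·‖x − y_k‖² ). Then for every k ≥ 0 and every x ∈ E, the generalized estimating-sequence inequality holds: Φ_k(x) ≤ λ_k·Φ_0(x) + (1 − λ_k)·(f(x) − ψ_k(x)). (Lemma 2 of the paper.) -/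
open RealInnerProductSpace

theorem stmt_1 {n : ℕ} (hn : 1 ≤ n) (μ : ℝ) (hμ : 0 ≤ μ)
    (f : EuclideanSpace ℝ (Fin n) → ℝ) (g : EuclideanSpace ℝ (Fin n) → EuclideanSpace ℝ (Fin n))
    (hf : ∀ x y, f x ≥ f y + ⟪g y, x - y⟫ + μ / 2 * ‖x - y‖ ^ 2)
    (α : ℕ → ℝ) (hα : ∀ k, α k ∈ Set.Ioo (0 : ℝ) 1)
    (y : ℕ → EuclideanSpace ℝ (Fin n))
    (ψ : ℕ → EuclideanSpace ℝ (Fin n) → ℝ)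
    (hψ : ∀ k x, 0 ≤ ψ k x) (hψ0 : ∀ x, ψ 0 x = 0)
    (Ψ : ℕ → ℝ) (hΨ : ∀ m k, m ≤ k → ∀ x, ψ m x ≤ Ψ k)
    (lam : ℕ → ℝ) (hlam0 : lam 0 = 1) (hlam : ∀ k, lam (k + 1) = (1 - α k) * lam k)
    (Φ : ℕ → EuclideanSpace ℝ (Fin n) → ℝ)
    (hΦ : ∀ k x, Φ (k + 1) x =
      (1 - α k) * (Φ k x + ψ k x) - ψ (k + 1) x - Ψ k + α k * ψ k x
        + α k * (f (y k) + ⟪g (y k), x - y k⟫ + μ / 2 * ‖x - y k‖ ^ 2)) :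
    ∀ k x, Φ k x ≤ lam k * Φ 0 x + (1 - lam k) * (f x - ψ k x) := by
  have hlamb : ∀ k, 0 < lam k ∧ lam k ≤ 1 := by
    intro k
    induction k with
    | zero => simp [hlam0]
    | succ k ih =>
      obtain ⟨h1, h2⟩ := ih
      obtain ⟨ha0, ha1⟩ := hα k
      rw [hlam k]
      constructor
      · exact mul_pos (by linarith) h1
      · nlinarith
  intro k
  induction k with
  | zero => intro x; simp [hlam0, hψ0]
  | succ k ih =>
    intro x
    have hIH := ih x
    have hQ := hf x (y k)
    have hΨk := hΨ k k le_rfl x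
    obtain ⟨ha0, ha1⟩ := hα k
    obtain ⟨hl0, hl1⟩ := hlamb k
    have hψk := hψ k x
    have hψk1 := hψ (k + 1) x
    rw [hΦ k x, hlam k]
    nlinarith [mul_nonneg (by linarith : (0:ℝ) ≤ 1 - α k)
        (by linarith : (0:ℝ) ≤ lam k * Φ 0 x + (1 - lam k) * (f x - ψ k x) - Φ k x),
      mul_nonneg ha0.le (by linarith : (0:ℝ) ≤ f x - (f (y k) + ⟪g (y k), x - y k⟫ + μ / 2 * ‖x - y k‖ ^ 2)),
      mul_nonneg (mul_nonneg (by linarith : (0:ℝ) ≤ 1 - α k) hl0.le) hψk1,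
      mul_nonneg (mul_nonneg (by linarith : (0:ℝ) ≤ 1 - α k) (by linarith : (0:ℝ) ≤ 1 - lam k)) hψk]
end

section
/- Let μ > 0, L > 0, S ≥ 0, and let f : E → ℝ satisfy the L-smoothness upper bound with gradient map g. Let x* ∈ E be a global minimizer of f with g(x*) = 0, and let x_0, x_k ∈ E, λ_k ∈ [0,1], and ψ_k : E → ℝ. Write D = e^{t} − e^{−t} with t = ((k+1)/2)·√((μ + S)/L). Assume (i) λ_k ≤ 2·μ/(L·D²) and (ii) f(x_k) − f(x*) ≤ λ_k·( f(x_0) − f(x*) ) − (1 − λ_k)·ψ_k(x*). Then f(x_k) − f(x*) ≤ μ·‖x_0 − x*‖² / D² − (1 − λ_k)·ψ_k(x*). (Theorem 2 of the paper, inequality (33), with S = ∑_{i=1}^{k−1} β_{i,k}·γ_i.) -/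
open RealInnerProductSpace

theorem stmt_14 {n : ℕ} (hn : 1 ≤ n) (μ L S : ℝ) (hμ : 0 < μ) (hL : 0 < L) (hS : 0 ≤ S)
    (f : EuclideanSpace ℝ (Fin n) → ℝ) (g : EuclideanSpace ℝ (Fin n) → EuclideanSpace ℝ (Fin n))
    (hf : ∀ x y, f x ≤ f y + ⟪g y, x - y⟫ + L / 2 * ‖x - y‖ ^ 2)
    (xstar : EuclideanSpace ℝ (Fin n)) (hmin : ∀ x, f xstar ≤ f x) (hgrad : g xstar = 0)
    (x0 xk : EuclideanSpace ℝ (Fin n)) (lamk : ℝ) (hlamk : lamk ∈ Set.Icc (0 : ℝ) 1)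
    (ψk : EuclideanSpace ℝ (Fin n) → ℝ) (k : ℕ)
    (t D : ℝ) (ht : t = ((k : ℝ) + 1) / 2 * Real.sqrt ((μ + S) / L))
    (hD : D = Real.exp t - Real.exp (-t))
    (h1 : lamk ≤ 2 * μ / (L * D ^ 2))
    (h2 : f xk - f xstar ≤ lamk * (f x0 - f xstar) - (1 - lamk) * ψk xstar) :
    f xk - f xstar ≤ μ * ‖x0 - xstar‖ ^ 2 / D ^ 2 - (1 - lamk) * ψk xstar := by
  have ht0 : 0 < t := by
    rw [ht]
    have hs : 0 < Real.sqrt ((μ + S) / L) :=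
      Real.sqrt_pos.mpr (div_pos (by linarith) hL)
    positivity
  have hDpos : 0 < D := by
    rw [hD]
    have : Real.exp (-t) < Real.exp t := Real.exp_lt_exp.mpr (by linarith)
    linarith
  have hD2 : 0 < D ^ 2 := by positivity
  -- smoothness bound at xstar
  have hub : f x0 - f xstar ≤ L / 2 * ‖x0 - xstar‖ ^ 2 := by
    have := hf x0 xstar
    rw [hgrad, inner_zero_left] at this
    linarith
  have hf0 : 0 ≤ f x0 - f xstar := by linarith [hmin x0]
  have hlam0 : 0 ≤ lamk := hlamk.1
  have key : lamk * (f x0 - f xstar) ≤ μ * ‖x0 - xstar‖ ^ 2 / D ^ 2 := by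
    have h3 : lamk * (f x0 - f xstar) ≤ (2 * μ / (L * D ^ 2)) * (L / 2 * ‖x0 - xstar‖ ^ 2) := by
      apply mul_le_mul h1 hub hf0
      positivity
    have heq : (2 * μ / (L * D ^ 2)) * (L / 2 * ‖x0 - xstar‖ ^ 2)
        = μ * ‖x0 - xstar‖ ^ 2 / D ^ 2 := by
      field_simp
    linarith [heq ▸ h3]
  linarith
end
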